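/- Let g(x) = 1 − (1 − x²)⁴ for |x| ≤ 1 and g(x) = 1 otherwise, and consider the planar ODE system q̇ = p, ṗ = −g′(q). Fix 0 ≤ q₀ < q̃₀ and let (q,p) and (q̃,p̃) be the solutions with initial data (q₀, 2) and (q̃₀, 2) respectively. Then q(t) < q̃(t) for all t ≥ 0. -/

import Mathlib

open Real Set MeasureTheory Filter Topology

noncomputable section

/-- The potential `g(x) = 1 − (1 − x²)⁴` for `|x| ≤ 1`, and `g(x) = 1` otherwise. -/
def gfun (x : ℝ) : ℝ := if |x| ≤ 1 then 1 - (1 - x ^ 2) ^ 4 else 1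

/-- The Hamiltonian `H(x,u) = u²/2 + g(x)` of the example. -/
def Hex (x u : ℝ) : ℝ := u ^ 2 / 2 + gfun x

/-- `(q,p)` solves the planar ODE system `q̇ = p`, `ṗ = −g′(q)`. -/
def SolvesCE (q p : ℝ → ℝ) : Prop :=
  ∀ t : ℝ, HasDerivAt q (p t) t ∧ HasDerivAt p (-(deriv gfun (q t))) t

/-- Derivative of `gfun`. -/
def gd (x : ℝ) : ℝ := if |x| ≤ 1 then 8 * x * (1 - x ^ 2) ^ 3 else 0

lemma hasDerivAt_P (x : ℝ) :
    HasDerivAt (fun y : ℝ => 1 - (1 - y ^ 2) ^ 4) (8 * x * (1 - x ^ 2) ^ 3) x := by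
  have h : HasDerivAt (fun y : ℝ => 1 - (1 - y ^ 2) ^ 4)
      (-((4 : ℕ) * (1 - x ^ 2) ^ (3 : ℕ) * (-((2 : ℕ) * x ^ (1 : ℕ))))) x :=
    (((hasDerivAt_pow 2 x).const_sub 1).pow 4).const_sub 1
  convert h using 1
  push_cast
  ring

lemma gfun_eq_of_one_le {x : ℝ} (h : 1 ≤ x) : gfun x = 1 := by
  rcases eq_or_lt_of_le h with h | h
  · rw [gfun, if_pos (by rw [← h, abs_one])]
    rw [← h]; ring
  · rw [gfun, if_neg]
    rw [abs_of_pos (by linarith)]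
    linarith

lemma gfun_eq_of_le_neg_one {x : ℝ} (h : x ≤ -1) : gfun x = 1 := by
  rcases eq_or_lt_of_le h with h | h
  · rw [gfun, if_pos (by rw [h]; norm_num)]
    rw [h]; ring
  · rw [gfun, if_neg]
    rw [abs_of_neg (by linarith)]
    linarith

lemma hasDerivAt_gfun (x : ℝ) : HasDerivAt gfun (gd x) x := by
  rcases lt_trichotomy (|x|) 1 with h | h | h
  · rw [gd, if_pos h.le]
    apply (hasDerivAt_P x).congr_of_eventuallyEq
    have hmem : {y : ℝ | |y| < 1} ∈ 𝓝 x :=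
      (isOpen_lt continuous_abs continuous_const).mem_nhds h
    filter_upwards [hmem] with y hy
    exact if_pos hy.le
  · rcases abs_eq (by norm_num : (0:ℝ) ≤ 1) |>.mp h with h1 | h1
    · -- x = 1
      subst h1
      have hA : HasDerivWithinAt gfun 0 (Iic 1) 1 := by
        have hP := (hasDerivAt_P 1).hasDerivWithinAt (s := Iic 1)
        have h0 : (8 : ℝ) * 1 * (1 - 1 ^ 2) ^ 3 = 0 := by ring
        rw [h0] at hP
        apply hP.congr_of_eventuallyEq
        · have h1 : Ioi (-1 : ℝ) ∈ 𝓝[Iic 1] (1 : ℝ) :=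
            nhdsWithin_le_nhds (Ioi_mem_nhds (by norm_num))
          filter_upwards [h1, self_mem_nhdsWithin] with y hy1 hy2
          exact if_pos (abs_le.mpr ⟨le_of_lt hy1, hy2⟩)
        · exact if_pos (by norm_num)
      have hB : HasDerivWithinAt gfun 0 (Ici 1) 1 := by
        apply (hasDerivWithinAt_const (1:ℝ) (Ici 1) 1).congr
        · exact fun y hy => gfun_eq_of_one_le hy
        · exact gfun_eq_of_one_le le_rfl
      have := hA.union hB
      rw [Iic_union_Ici, hasDerivWithinAt_univ] at this
      have hgd : gd 1 = 0 := by rw [gd, if_pos (by norm_num)]; ring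
      rw [hgd]; exact this
    · -- x = -1
      subst h1
      have hA : HasDerivWithinAt gfun 0 (Ici (-1)) (-1) := by
        have hP := (hasDerivAt_P (-1)).hasDerivWithinAt (s := Ici (-1))
        have h0 : (8 : ℝ) * (-1) * (1 - (-1) ^ 2) ^ 3 = 0 := by ring
        rw [h0] at hP
        apply hP.congr_of_eventuallyEq
        · have h1 : Iio (1 : ℝ) ∈ 𝓝[Ici (-1)] (-1 : ℝ) :=
            nhdsWithin_le_nhds (Iio_mem_nhds (by norm_num))
          filter_upwards [h1, self_mem_nhdsWithin] with y hy1 hy2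
          exact if_pos (abs_le.mpr ⟨hy2, le_of_lt hy1⟩)
        · exact if_pos (by norm_num)
      have hB : HasDerivWithinAt gfun 0 (Iic (-1)) (-1) := by
        apply (hasDerivWithinAt_const (-1:ℝ) (Iic (-1)) 1).congr
        · exact fun y hy => gfun_eq_of_le_neg_one hy
        · exact gfun_eq_of_le_neg_one le_rfl
      have := hB.union hA
      rw [Iic_union_Ici, hasDerivWithinAt_univ] at this
      have hgd : gd (-1) = 0 := by rw [gd, if_pos (by norm_num)]; ring
      rw [hgd]; exact this
  · rw [gd, if_neg (not_le.mpr h)]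
    apply (hasDerivAt_const x (1:ℝ)).congr_of_eventuallyEq
    have hmem : {y : ℝ | 1 < |y|} ∈ 𝓝 x :=
      (isOpen_lt continuous_const continuous_abs).mem_nhds h
    filter_upwards [hmem] with y hy
    exact if_neg (not_le.mpr hy)

lemma deriv_gfun (x : ℝ) : deriv gfun x = gd x := (hasDerivAt_gfun x).deriv

lemma gd_eq_zero_of_one_le {x : ℝ} (h : 1 ≤ x) : gd x = 0 := by
  rw [gd]
  split_ifs with h'
  · have hx : x = 1 := le_antisymm (le_of_abs_le h') h
    rw [hx]; ring
  · rfl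

lemma gfun_nonneg (x : ℝ) : 0 ≤ gfun x := by
  rw [gfun]
  split_ifs with h
  · have h2 : x ^ 2 ≤ 1 := by
      have := abs_le.mp h; nlinarith
    have h3 : (0:ℝ) ≤ 1 - x ^ 2 := by linarith
    have h4 : (1 - x ^ 2) ^ 4 ≤ 1 := by
      calc (1 - x ^ 2) ^ 4 ≤ 1 ^ 4 := pow_le_pow_left₀ h3 (by nlinarith) 4
        _ = 1 := one_pow 4
    linarith
  · norm_num

lemma gfun_le_one (x : ℝ) : gfun x ≤ 1 := by
  rw [gfun]
  split_ifs with h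
  · have h4 : (0:ℝ) ≤ (1 - x ^ 2) ^ 4 := by positivity
    linarith
  · exact le_refl 1

lemma gfun_mono {a b : ℝ} (ha : 0 ≤ a) (hab : a ≤ b) : gfun a ≤ gfun b := by
  rcases le_or_gt b 1 with hb | hb
  · have hb' : |b| ≤ 1 := abs_le.mpr ⟨by linarith, hb⟩
    have ha' : |a| ≤ 1 := abs_le.mpr ⟨by linarith, by linarith⟩
    rw [gfun, if_pos ha', gfun, if_pos hb']
    have h1 : a ^ 2 ≤ b ^ 2 := pow_le_pow_left₀ ha hab 2
    have h2 : (0:ℝ) ≤ 1 - b ^ 2 := by nlinarith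
    have h3 : (1 - b ^ 2) ^ 4 ≤ (1 - a ^ 2) ^ 4 := pow_le_pow_left₀ h2 (by linarith) 4
    linarith
  · rw [gfun_eq_of_one_le hb.le]
    exact gfun_le_one a

lemma gfun_strict {a b : ℝ} (ha : 0 ≤ a) (ha1 : a < 1) (hab : a < b) : gfun a < gfun b := by
  have ha' : |a| ≤ 1 := abs_le.mpr ⟨by linarith, ha1.le⟩
  have hpos : (0:ℝ) < 1 - a ^ 2 := by nlinarith
  rcases le_or_gt b 1 with hb | hb
  · have hb' : |b| ≤ 1 := abs_le.mpr ⟨by linarith, hb⟩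
    rw [gfun, if_pos ha', gfun, if_pos hb']
    have h1 : a ^ 2 < b ^ 2 := by nlinarith
    have h2 : (0:ℝ) ≤ 1 - b ^ 2 := by nlinarith
    have h3 : (1 - b ^ 2) ^ 4 < (1 - a ^ 2) ^ 4 := pow_lt_pow_left₀ (by linarith) h2 (by norm_num)
    linarith
  · rw [gfun_eq_of_one_le hb.le, gfun, if_pos ha']
    have : (0:ℝ) < (1 - a ^ 2) ^ 4 := pow_pos hpos 4
    linarith

lemma energy {q p : ℝ → ℝ} (hsol : SolvesCE q p) (t : ℝ) :
    p t ^ 2 / 2 + gfun (q t) = p 0 ^ 2 / 2 + gfun (q 0) := by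
  have hE : ∀ s, HasDerivAt (fun u => p u ^ 2 / 2 + gfun (q u)) 0 s := by
    intro s
    have hps := (hsol s).2
    rw [deriv_gfun] at hps
    have h1 : HasDerivAt (fun u => p u ^ 2 / 2)
        (((2 : ℕ) * p s ^ (1 : ℕ) * (-(gd (q s)))) / 2) s := (hps.pow 2).div_const 2
    have h2 : HasDerivAt (fun u => gfun (q u)) (gd (q s) * p s) s :=
      (hasDerivAt_gfun (q s)).comp s (hsol s).1
    have h3 : HasDerivAt (fun u => p u ^ 2 / 2 + gfun (q u)) _ s := h1.add h2
    convert h3 using 1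
    push_cast
    ring
  exact is_const_of_deriv_eq_zero (fun s => (hE s).differentiableAt)
    (fun s => (hE s).deriv) t 0

lemma psq {q p : ℝ → ℝ} (hsol : SolvesCE q p) (hp0 : p 0 = 2) (t : ℝ) :
    2 ≤ p t ^ 2 := by
  have h := energy hsol t
  rw [hp0] at h
  have h1 := gfun_nonneg (q 0)
  have h2 := gfun_le_one (q t)
  nlinarith

lemma ppos {q p : ℝ → ℝ} (hsol : SolvesCE q p) (hp0 : p 0 = 2) (t : ℝ) :
    0 < p t := by
  by_contra h
  push_neg at h
  have hne : ∀ s, p s ≠ 0 := by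
    intro s hs
    have := psq hsol hp0 s
    rw [hs] at this
    norm_num at this
  have hc : Continuous p :=
    continuous_iff_continuousAt.mpr fun s => (hsol s).2.differentiableAt.continuousAt
  have hmem : (0:ℝ) ∈ uIcc (p 0) (p t) := by
    rw [hp0]
    exact mem_uIcc.mpr (Or.inr ⟨h, by norm_num⟩)
  obtain ⟨s, _, hs⟩ := intermediate_value_uIcc hc.continuousOn hmem
  exact hne s hs

lemma qmono {q p : ℝ → ℝ} (hsol : SolvesCE q p) (hp0 : p 0 = 2) : StrictMono q :=
  strictMono_of_deriv_pos fun t => by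
    rw [(hsol t).1.deriv]; exact ppos hsol hp0 t

lemma qlin {q p : ℝ → ℝ} (hsol : SolvesCE q p) (hp0 : p 0 = 2) (hq1 : 1 ≤ q 0) :
    ∀ t, 0 ≤ t → q t = q 0 + 2 * t := by
  intro t ht
  have hm := qmono hsol hp0
  have hq1' : ∀ s ∈ Icc (0:ℝ) t, 1 ≤ q s := fun s hs =>
    hq1.trans (hm.monotone hs.1)
  have hp2 : ∀ s ∈ Icc (0:ℝ) t, p s = 2 := by
    have hc : ContinuousOn p (Icc 0 t) :=
      (continuous_iff_continuousAt.mpr fun s => (hsol s).2.differentiableAt.continuousAt).continuousOn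
    have := constant_of_has_deriv_right_zero hc (f := p) (a := 0) (b := t) ?_
    · intro s hs
      rw [this s hs, hp0]
    · intro s hs
      have h := (hsol s).2
      rw [deriv_gfun, gd_eq_zero_of_one_le (hq1' s ⟨hs.1, hs.2.le⟩), neg_zero] at h
      exact h.hasDerivWithinAt
  have hconst : ∀ s ∈ Icc (0:ℝ) t, q s - 2 * s = q 0 - 2 * 0 := by
    apply constant_of_has_deriv_right_zero
    · apply ContinuousOn.sub
      · exact (continuous_iff_continuousAt.mpr fun s =>
          (hsol s).1.differentiableAt.continuousAt).continuousOn
      · exact (continuous_const.mul continuous_id).continuousOn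
    · intro s hs
      have h := (hsol s).1.sub ((hasDerivAt_id s).const_mul 2)
      rw [hp2 s ⟨hs.1, hs.2.le⟩] at h
      have h0 : (2 : ℝ) - 2 * 1 = 0 := by ring
      rw [h0] at h
      exact h.hasDerivWithinAt
  have := hconst t ⟨ht, le_rfl⟩
  linarith

/-- Lemma 5.9: comparison of the trajectories issued from `(q₀, 2)` and `(q̃₀, 2)`
with `0 ≤ q₀ < q̃₀`: they never cross for `t ≥ 0`. -/
theorem stmt_16 (q₀ qt₀ : ℝ) (hq₀ : 0 ≤ q₀) (hlt : q₀ < qt₀)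
    (q p qt pt : ℝ → ℝ) (hsol : SolvesCE q p) (hsolt : SolvesCE qt pt)
    (hq0 : q 0 = q₀) (hp0 : p 0 = 2) (hqt0 : qt 0 = qt₀) (hpt0 : pt 0 = 2) :
    ∀ t : ℝ, 0 ≤ t → q t < qt t := by
  rcases le_or_gt 1 q₀ with hcase | hcase
  · -- trivial region: both trajectories move in the flat part of the potential
    intro t ht
    have h1 := qlin hsol hp0 (by rw [hq0]; exact hcase) t ht
    have h2 := qlin hsolt hpt0 (by rw [hqt0]; linarith) t ht
    rw [h1, h2, hq0, hqt0]
    linarith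
  · -- main case: strictly different energies
    have hg : gfun q₀ < gfun qt₀ := gfun_strict hq₀ hcase hlt
    intro t ht
    by_contra hcon
    push_neg at hcon
    set S : Set ℝ := {s : ℝ | 0 ≤ s ∧ qt s - q s ≤ 0} with hSdef
    have hcq : Continuous q :=
      continuous_iff_continuousAt.mpr fun s => (hsol s).1.differentiableAt.continuousAt
    have hcqt : Continuous qt :=
      continuous_iff_continuousAt.mpr fun s => (hsolt s).1.differentiableAt.continuousAt
    have hSclosed : IsClosed S := by
      apply IsClosed.inter
      · exact isClosed_le continuous_const continuous_id
      · exact isClosed_le (hcqt.sub hcq) continuous_const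
    have hSne : S.Nonempty := ⟨t, ht, by linarith⟩
    have hSbdd : BddBelow S := ⟨0, fun x hx => hx.1⟩
    set T := sInf S with hTdef
    have hTS : T ∈ S := hSclosed.csInf_mem hSne hSbdd
    have hT0 : 0 < T := by
      rcases hTS.1.lt_or_eq with h | h
      · exact h
      · exfalso
        rw [← h] at hTS
        have : qt 0 - q 0 ≤ 0 := hTS.2
        rw [hq0, hqt0] at this
        linarith
    have hbefore : ∀ s, 0 ≤ s → s < T → 0 < qt s - q s := by
      intro s hs hsT
      by_contra hc
      push_neg at hc
      exact absurd (csInf_le hSbdd ⟨hs, hc⟩) (not_le.mpr hsT)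
    -- velocities at time T
    have hmq := qmono hsol hp0
    have hmqt := qmono hsolt hpt0
    have hqT : q₀ ≤ q T := by rw [← hq0]; exact hmq.monotone hTS.1
    have hqtT : 0 ≤ qt T := by
      have h0 : (0:ℝ) ≤ qt 0 := by rw [hqt0]; linarith
      linarith [hmqt.monotone hTS.1]
    have hgle : gfun (qt T) ≤ gfun (q T) := gfun_mono hqtT (by linarith [hTS.2])
    have hEq := energy hsol T
    have hEqt := energy hsolt T
    rw [hp0, hq0] at hEq
    rw [hpt0, hqt0] at hEqt
    have hsqlt : p T ^ 2 < pt T ^ 2 := by nlinarith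
    have hpT := ppos hsol hp0 T
    have hptT := ppos hsolt hpt0 T
    have hplt : p T < pt T := lt_of_pow_lt_pow_left₀ 2 hptT.le hsqlt
    -- derivative of the gap at T is positive, contradiction with the gap
    -- being positive before T and ≤ 0 at T
    have hfd : HasDerivAt (fun s => qt s - q s) (pt T - p T) T :=
      (hsolt T).1.sub (hsol T).1
    rw [hasDerivAt_iff_tendsto_slope] at hfd
    have hfd' := hfd.mono_left
      (nhdsWithin_mono T (fun x hx => (ne_of_lt hx : x ≠ T)))
    have hev : ∀ᶠ s in 𝓝[<] T, 0 < slope (fun s => qt s - q s) T s :=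
      hfd'.eventually (eventually_gt_nhds (by linarith))
    have hmem : Ioo 0 T ∈ 𝓝[<] T := Ioo_mem_nhdsLT hT0
    obtain ⟨s, hslope, hsIoo⟩ := (hev.and (eventually_of_mem hmem fun x hx => hx)).exists
    have hfs : 0 < qt s - q s := hbefore s hsIoo.1.le hsIoo.2
    have hslope' : slope (fun s => qt s - q s) T s < 0 := by
      rw [slope_def_field]
      apply div_neg_of_pos_of_neg
      · have := hTS.2; linarith
      · linarith [hsIoo.2]
    linarith
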